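/- With the same construction (Γ a star centered at c over V(H), G = (V(H)∪{c}, E(H)) with edge weights 2), suppose S is a set of at most k added edges such that G+S has dilation at most 3 with respect to Γ, and suppose moreover that S contains no edge (u,v) with u,v ∈ V(H) such that (u,c) ∈ S. Then the set V_C = {v ∈ V(H) : (v,c) ∈ S} is a dominating set of H of size at most k. -/

import Mathlib

open SimpleGraph

/-- The weight of a walk in `G`, where each edge `uv` is weighted by the
shortest-path distance `Γ.dist u v` in the (unweighted) graph `Γ`. -/
noncomputable def walkWeight {V : Type*} (Γ G : SimpleGraph V) :
    {x y : V} → G.Walk x y → ℕ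
  | x, _, .cons (v := v) _ p => Γ.dist x v + walkWeight Γ G p
  | _, _, .nil => 0

/-- Weighted shortest-path distance in `G`, with edge weights `Γ.dist`;
`⊤` if there is no walk. -/
noncomputable def wdist {V : Type*} (Γ G : SimpleGraph V) (x y : V) : ℕ∞ :=
  ⨅ p : G.Walk x y, (walkWeight Γ G p : ℕ∞)

/-- Star construction, converse direction: if `S` is a set of at most `k` added edges
giving dilation at most `3`, and `S` never contains both an edge `(u,v)` inside `V(H)`
and an edge `(u,c)`, then the neighbors of the center `c = none` in `S` form a
dominating set of `H` of size at most `k`. -/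
theorem dilation_three_gives_dominating_set {V : Type*} [Fintype V]
    (H : SimpleGraph V) (k : ℕ)
    (Γ G S : SimpleGraph (Option V))
    (hΓ : ∀ x y : Option V, Γ.Adj x y ↔ x ≠ y ∧ (x = none ∨ y = none))
    (hG : ∀ x y : Option V, G.Adj x y ↔
      ∃ u v : V, x = some u ∧ y = some v ∧ H.Adj u v)
    (hSk : S.edgeSet.ncard ≤ k)
    (hdil : ∀ x y : Option V, wdist Γ (G ⊔ S) x y ≤ (3 : ℕ∞) * (Γ.dist x y : ℕ∞))
    (hrepl : ∀ u v : V, S.Adj (some u) (some v) →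
      ¬ S.Adj (some u) none ∧ ¬ S.Adj (some v) none) :
    {v : V | S.Adj (some v) none}.ncard ≤ k ∧
    (∀ u : V, S.Adj (some u) none ∨
      ∃ v : V, S.Adj (some v) none ∧ H.Adj v u) := by
  -- Γ-distance from any `some` vertex to the center is 1
  have hd1 : ∀ a : V, Γ.dist (some a) none = 1 := by
    intro a
    rw [SimpleGraph.dist_eq_one_iff_adj, hΓ]
    exact ⟨by simp, Or.inr rfl⟩
  -- Γ-distance between distinct `some` vertices is 2
  have hd2 : ∀ a b : V, a ≠ b → Γ.dist (some a) (some b) = 2 := by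
    intro a b hab
    have adj1 : Γ.Adj (some a) none := (hΓ _ _).mpr ⟨by simp, Or.inr rfl⟩
    have adj2 : Γ.Adj none (some b) := (hΓ _ _).mpr ⟨by simp, Or.inl rfl⟩
    have hle : Γ.dist (some a) (some b) ≤ 2 :=
      SimpleGraph.dist_le (SimpleGraph.Walk.cons adj1 (SimpleGraph.Walk.cons adj2 SimpleGraph.Walk.nil))
    have hne0 : Γ.dist (some a) (some b) ≠ 0 := by
      intro h
      rcases SimpleGraph.dist_eq_zero_iff_eq_or_not_reachable.mp h with h' | h'
      · exact hab (Option.some_injective _ h')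
      · exact h' ⟨SimpleGraph.Walk.cons adj1 (SimpleGraph.Walk.cons adj2 SimpleGraph.Walk.nil)⟩
    have hne1 : Γ.dist (some a) (some b) ≠ 1 := by
      intro h
      have := (hΓ _ _).mp (SimpleGraph.dist_eq_one_iff_adj.mp h)
      simp at this
    omega
  constructor
  · -- cardinality bound
    have hfin : S.edgeSet.Finite := Set.toFinite _
    have := Set.ncard_le_ncard_of_injOn (fun v => s(some v, (none : Option V)))
      (fun v hv => by
        rw [SimpleGraph.mem_edgeSet]; exact hv)
      (fun a _ b _ h => by simpa using h) hfin
    exact this.trans hSk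
  · intro u
    by_contra hcon
    push_neg at hcon
    obtain ⟨h1, h2⟩ := hcon
    -- extract a walk of weight ≤ 3 from `some u` to the center
    have hw : ∃ p : (G ⊔ S).Walk (some u) none, walkWeight Γ (G ⊔ S) p ≤ 3 := by
      by_contra hno
      push_neg at hno
      have : (4 : ℕ∞) ≤ wdist Γ (G ⊔ S) (some u) none := by
        refine le_iInf fun p => ?_
        have := hno p
        exact_mod_cast this
      have hd := hdil (some u) none
      rw [hd1 u] at hd
      simp at hd
      have : (4 : ℕ∞) ≤ 3 := this.trans hd
      norm_num at this
    obtain ⟨p, hp⟩ := hw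
    cases p with
    | cons h' q =>
      rename_i w
      match w with
      | none =>
        -- first step goes directly to the center
        rcases (SimpleGraph.sup_adj _ _ _ _).mp h' with hGe | hSe
        · obtain ⟨a, b, _, hb, _⟩ := (hG _ _).mp hGe
          cases hb
        · exact h1 hSe
      | some v =>
        have huv : u ≠ v := by
          intro h; subst h
          exact h'.ne rfl
        have hq : walkWeight Γ (G ⊔ S) q ≤ 1 := by
          have : walkWeight Γ (G ⊔ S) (SimpleGraph.Walk.cons h' q)
              = Γ.dist (some u) (some v) + walkWeight Γ (G ⊔ S) q := rfl
          rw [this, hd2 u v huv] at hp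
          omega
        -- q is a walk from `some v` to the center of weight ≤ 1;
        -- its first step must go straight to the center.
        have hvc : (G ⊔ S).Adj (some v) none := by
          cases q with
          | cons h'' r =>
            rename_i w'
            match w' with
            | none => exact h''
            | some b =>
              have hvb : v ≠ b := by
                intro h; subst h; exact h''.ne rfl
              have : walkWeight Γ (G ⊔ S) (SimpleGraph.Walk.cons h'' r)
                  = Γ.dist (some v) (some b) + walkWeight Γ (G ⊔ S) r := rfl
              rw [this, hd2 v b hvb] at hq
              omega
        have hvcS : S.Adj (some v) none := by
          rcases (SimpleGraph.sup_adj _ _ _ _).mp hvc with hGe | hSe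
          · obtain ⟨a, b, _, hb, _⟩ := (hG _ _).mp hGe
            cases hb
          · exact hSe
        rcases (SimpleGraph.sup_adj _ _ _ _).mp h' with hGe | hSe
        · obtain ⟨a, b, ha, hb, hab⟩ := (hG _ _).mp hGe
          injection ha with ha'
          injection hb with hb'
          subst ha'; subst hb'
          exact h2 v hvcS hab.symm
        · exact (hrepl u v hSe).2 hvcS
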